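/- arXiv:2109.12156 — 2 statements merged into one kernel-verified Lean document; each statement's English description precedes it below -/
import Mathlib

section
/- If Y is a real-valued random variable whose conditional CDF given X = x, namely F(·|x), is continuous in y for every x, then the random variable U = F(Y|X) is uniformly distributed on (0,1) and is independent of X. -/
open MeasureTheory ProbabilityTheory Set Filter
open scoped ENNReal Topology

section PITAux

variable {α : Type*} [MeasurableSpace α]

private lemma aux_ofReal_max (t : ℝ) : ENNReal.ofReal (max 0 t) = ENNReal.ofReal t := by
  rcases le_total t 0 with h | h
  · rw [max_eq_left h, ENNReal.ofReal_of_nonpos h, ENNReal.ofReal_zero]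
  · rw [max_eq_right h]

private lemma aux_vol_Iic (u : ℝ) :
    (volume.restrict (Ioo (0:ℝ) 1)) (Iic u) = if u < 1 then ENNReal.ofReal u else 1 := by
  rw [Measure.restrict_apply measurableSet_Iic]
  split_ifs with h
  · rcases le_or_gt u 0 with hu | hu
    · have he : Iic u ∩ Ioo (0:ℝ) 1 = ∅ := by
        ext z
        simp only [mem_inter_iff, mem_Iic, mem_Ioo, mem_empty_iff_false, iff_false, not_and]
        intro hz hz0
        exact absurd (lt_of_le_of_lt (hz.trans hu) hz0) (lt_irrefl _)
      rw [he]
      simp [ENNReal.ofReal_of_nonpos hu]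
  
    · have he : Iic u ∩ Ioo (0:ℝ) 1 = Ioc 0 u := by
        ext z
        simp only [mem_inter_iff, mem_Iic, mem_Ioo, mem_Ioc]
        constructor
        · rintro ⟨h1, h2, _⟩; exact ⟨h2, h1⟩
        · rintro ⟨h1, h2⟩; exact ⟨h2, h1, lt_of_le_of_lt h2 h⟩
      rw [he, Real.volume_Ioc, sub_zero]
  · push_neg at h
    have he : Iic u ∩ Ioo (0:ℝ) 1 = Ioo 0 1 := by
      ext z
      simp only [mem_inter_iff, mem_Iic, mem_Ioo]
      exact ⟨fun hz => hz.2, fun hz => ⟨hz.2.le.trans h, hz⟩⟩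
    rw [he, Real.volume_Ioo, sub_zero, ENNReal.ofReal_one]

private lemma aux_iInf_rat_gt {G : ℝ → ℝ} (hc : Continuous G) (hm : Monotone G) (y : ℝ) :
    ⨅ r : { r' : ℚ // y < ↑r' }, G r = G y := by
  have hne : Nonempty { r' : ℚ // y < ↑r' } := by
    obtain ⟨q, hq⟩ := exists_rat_gt y
    exact ⟨⟨q, hq⟩⟩
  have hbdd : BddBelow (range fun r : { r' : ℚ // y < ↑r' } => G r) := by
    refine ⟨G y, ?_⟩
    rintro _ ⟨r, rfl⟩
    exact hm r.2.le
  refine le_antisymm ?_ (le_ciInf fun r => hm r.2.le)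
  refine le_of_forall_pos_le_add fun ε hε => ?_
  obtain ⟨δ, hδ, hδ'⟩ := Metric.continuousAt_iff.mp hc.continuousAt ε hε
  obtain ⟨q, hq1, hq2⟩ := exists_rat_btwn (lt_add_of_pos_right y hδ)
  have hd : dist ((q:ℝ)) y < δ := by
    rw [Real.dist_eq, abs_of_pos (by linarith)]
    linarith
  have h2 : G q < G y + ε := by
    have := hδ' hd
    rw [Real.dist_eq] at this
    have := abs_lt.mp this
    linarith [this.2]
  exact le_trans (ciInf_le hbdd ⟨q, hq1⟩) h2.le

private lemma aux_iInf_rat_Ioi {G : ℝ → ℝ} (hc : Continuous G) (hm : Monotone G) (t : ℚ) :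
    ⨅ r : Ioi t, G (r : ℝ) = G (t : ℝ) := by
  have hne : Nonempty (Ioi t) := ⟨⟨t + 1, by simp⟩⟩
  have hbdd : BddBelow (range fun r : Ioi t => G (r : ℝ)) := by
    refine ⟨G (t:ℝ), ?_⟩
    rintro _ ⟨r, rfl⟩
    exact hm (by exact_mod_cast r.2.le)
  refine le_antisymm ?_ (le_ciInf fun r => hm (by exact_mod_cast r.2.le))
  refine le_of_forall_pos_le_add fun ε hε => ?_
  obtain ⟨δ, hδ, hδ'⟩ := Metric.continuousAt_iff.mp hc.continuousAt ε hε
  obtain ⟨q, hq1, hq2⟩ := exists_rat_btwn (lt_add_of_pos_right (t:ℝ) hδ)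
  have hd : dist ((q:ℝ)) (t:ℝ) < δ := by
    rw [Real.dist_eq, abs_of_pos (by linarith)]
    linarith
  have h2 : G q < G (t:ℝ) + ε := by
    have := hδ' hd
    rw [Real.dist_eq] at this
    have := abs_lt.mp this
    linarith [this.2]
  have hqIoi : q ∈ Ioi t := by exact_mod_cast hq1
  exact le_trans (ciInf_le hbdd ⟨q, hqIoi⟩) h2.le

end PITAux

/-- Probability integral transform. If `F x` is, for each `x`, the
conditional CDF of `Y` given `X = x` (expressed via the disintegration identity
`P(X ∈ s, Y ≤ y) = ∫_{x ∈ s} F x y d(law X)`), and `F x` is continuous in `y`,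
then `U = F (X ω) (Y ω)` is uniformly distributed on `(0,1)` and independent of `X`. -/
theorem pit_uniform_and_independent
    {Ω : Type*} [MeasurableSpace Ω] (P : Measure Ω) [IsProbabilityMeasure P]
    {α : Type*} [MeasurableSpace α]
    (X : Ω → α) (Y : Ω → ℝ) (hX : Measurable X) (hY : Measurable Y)
    (F : α → ℝ → ℝ)
    (hFmeas : Measurable (Function.uncurry F))
    (hFcont : ∀ x, Continuous (F x))
    (hFcdf : ∀ x, Monotone (F x))
    (hcond : ∀ (s : Set α), MeasurableSet s → ∀ y : ℝ,
      P {ω | X ω ∈ s ∧ Y ω ≤ y} = ∫⁻ x in s, ENNReal.ofReal (F x y) ∂(P.map X)) :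
    Measure.map (fun ω => F (X ω) (Y ω)) P = volume.restrict (Ioo (0:ℝ) 1) ∧
      IndepFun (fun ω => F (X ω) (Y ω)) X P := by
  classical
  have hμprob : IsProbabilityMeasure (P.map X) := Measure.isProbabilityMeasure_map hX.aemeasurable
  set μ : Measure α := P.map X with hμdef
  -- clamped rational CDF candidate
  set f : α → ℚ → ℝ := fun x q => min 1 (max 0 (F x (q:ℝ))) with hfdef
  have hFxq_meas : ∀ y : ℝ, Measurable fun x => F x y := fun y =>
    hFmeas.comp (measurable_id.prodMk measurable_const)
  have hf : Measurable f :=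
    measurable_pi_lambda _ fun q => measurable_const.min (measurable_const.max (hFxq_meas q))
  set σ : α → StieltjesFunction ℝ := stieltjesOfMeasurableRat f hf with hσdef
  set κ : Kernel α ℝ :=
    ⟨fun x => (σ x).measure, measurable_measure_stieltjesOfMeasurableRat hf⟩ with hκdef
  have hκx : ∀ x, κ x = (σ x).measure := fun _ => rfl
  haveI : IsMarkovKernel κ := ⟨fun x => by
    rw [hκx]
    exact ⟨measure_stieltjesOfMeasurableRat_univ hf x⟩⟩
  have hmono_f : ∀ x, Monotone (f x) := fun x a b hab =>
    min_le_min le_rfl (max_le_max le_rfl (hFcdf x (by exact_mod_cast hab)))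
  have hf0 : ∀ x q, 0 ≤ f x q := fun x q => le_min zero_le_one (le_max_left _ _)
  have hf1 : ∀ x q, f x q ≤ 1 := fun x q => min_le_left _ _
  -- Step 1: a.e. F x · ≤ 1
  have h1 : ∀ q : ℚ, ∀ᵐ x ∂μ, ENNReal.ofReal (F x (q:ℝ)) ≤ 1 := by
    intro q
    refine ae_le_of_forall_setLIntegral_le_of_sigmaFinite
      ((hFxq_meas (q:ℝ)).ennreal_ofReal) fun s hs _ => ?_
    rw [← hcond s hs (q:ℝ)]
    calc P {ω | X ω ∈ s ∧ Y ω ≤ (q:ℝ)} ≤ P (X ⁻¹' s) := measure_mono fun ω hω => hω.1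
    _ = μ s := (Measure.map_apply hX hs).symm
    _ = ∫⁻ _ in s, 1 ∂μ := by rw [setLIntegral_one]
  have hF1 : ∀ᵐ x ∂μ, ∀ y : ℝ, F x y ≤ 1 := by
    filter_upwards [ae_all_iff.2 h1] with x hx y
    obtain ⟨q, hq⟩ := exists_rat_gt y
    exact le_trans (hFcdf x hq.le) (ENNReal.ofReal_le_one.mp (hx q))
  -- Integral identity for the clamped f
  have hfeqF : ∀ᵐ x ∂μ, ∀ q : ℚ, ENNReal.ofReal (f x q) = ENNReal.ofReal (F x (q:ℝ)) := by
    filter_upwards [hF1] with x hx q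
    have h : f x q = max 0 (F x (q:ℝ)) := min_eq_right (max_le zero_le_one (hx _))
    rw [h, aux_ofReal_max]
  have hint : ∀ q : ℚ, ∫⁻ x, ENNReal.ofReal (f x q) ∂μ = P {ω | Y ω ≤ (q:ℝ)} := by
    intro q
    rw [lintegral_congr_ae (hfeqF.mono fun x hx => hx q)]
    have h := hcond univ MeasurableSet.univ (q:ℝ)
    rw [Measure.restrict_univ] at h
    simp only [mem_univ, true_and] at h
    exact h.symm
  -- Step 2: a.e. tendsto atTop 1
  have hS : ∀ᵐ x ∂μ, (⨆ n : ℕ, ENNReal.ofReal (f x (n:ℚ))) = 1 := by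
    have hmeasn : ∀ n : ℕ, Measurable fun x => ENNReal.ofReal (f x (n:ℚ)) := fun n =>
      (hf.eval).ennreal_ofReal
    have hSmeas : Measurable fun x => ⨆ n : ℕ, ENNReal.ofReal (f x (n:ℚ)) :=
      Measurable.iSup hmeasn
    have hSle : ∀ x, (⨆ n : ℕ, ENNReal.ofReal (f x (n:ℚ))) ≤ 1 := fun x =>
      iSup_le fun n => ENNReal.ofReal_le_one.2 (hf1 x _)
    have hmono' : Monotone fun (n : ℕ) => fun x => ENNReal.ofReal (f x (n:ℚ)) := by
      intro a b hab
      intro x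
      exact ENNReal.ofReal_le_ofReal (hmono_f x (by exact_mod_cast hab))
    have hSint : ∫⁻ x, (⨆ n : ℕ, ENNReal.ofReal (f x (n:ℚ))) ∂μ = 1 := by
      rw [lintegral_iSup hmeasn hmono']
      simp_rw [hint]
      have hmonoSets : Monotone fun n : ℕ => {ω | Y ω ≤ ((n:ℚ):ℝ)} := by
        intro a b hab ω hω
        simp only [mem_setOf_eq] at *
        have hc : ((a:ℚ):ℝ) ≤ ((b:ℚ):ℝ) := by exact_mod_cast hab
        linarith
      rw [← Monotone.measure_iUnion hmonoSets]
      have hU : (⋃ n : ℕ, {ω | Y ω ≤ ((n:ℚ):ℝ)}) = univ := by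
        refine eq_univ_of_forall fun ω => mem_iUnion.2 ?_
        obtain ⟨n, hn⟩ := exists_nat_ge (Y ω)
        exact ⟨n, by push_cast; exact hn⟩
      rw [hU, measure_univ]
    have h0 : ∫⁻ x, (1 - ⨆ n : ℕ, ENNReal.ofReal (f x (n:ℚ))) ∂μ = 0 := by
      rw [lintegral_sub hSmeas (by rw [hSint]; exact ENNReal.one_ne_top) (ae_of_all _ hSle),
        hSint, lintegral_one, measure_univ, tsub_self]
    filter_upwards [(lintegral_eq_zero_iff (measurable_const.sub hSmeas)).1 h0] with x hx
    have hx' : (1:ℝ≥0∞) - (⨆ n : ℕ, ENNReal.ofReal (f x (n:ℚ))) = 0 := hx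
    exact le_antisymm (hSle x) (tsub_eq_zero_iff_le.mp hx')
  have htop : ∀ᵐ x ∂μ, Tendsto (f x) atTop (𝓝 1) := by
    filter_upwards [hS] with x hx
    have hbdd : BddAbove (range (f x)) := ⟨1, by rintro _ ⟨q, rfl⟩; exact hf1 x q⟩
    have ht := tendsto_atTop_ciSup (hmono_f x) hbdd
    have hL : (⨆ q : ℚ, f x q) = 1 := by
      refine le_antisymm (ciSup_le fun q => hf1 x q) ?_
      have h1le : (1:ℝ≥0∞) ≤ ENNReal.ofReal (⨆ q : ℚ, f x q) := by
        rw [← hx]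
        exact iSup_le fun n => ENNReal.ofReal_le_ofReal (le_ciSup hbdd ((n:ℕ):ℚ))
      exact ENNReal.one_le_ofReal.mp h1le
    rwa [hL] at ht
  -- Step 3: a.e. tendsto atBot 0
  have hT : ∀ᵐ x ∂μ, (⨅ n : ℕ, ENNReal.ofReal (f x (-(n:ℚ)))) = 0 := by
    have hmeasn : ∀ n : ℕ, Measurable fun x => ENNReal.ofReal (f x (-(n:ℚ))) := fun n =>
      (hf.eval).ennreal_ofReal
    have hanti : Antitone fun (n:ℕ) => fun x => ENNReal.ofReal (f x (-(n:ℚ))) := by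
      intro a b hab
      intro x
      refine ENNReal.ofReal_le_ofReal (hmono_f x ?_)
      have hc : (a:ℚ) ≤ (b:ℚ) := by exact_mod_cast hab
      linarith
    have hTint : ∫⁻ x, (⨅ n : ℕ, ENNReal.ofReal (f x (-(n:ℚ)))) ∂μ = 0 := by
      rw [lintegral_iInf hmeasn hanti]
      · simp_rw [hint]
        have hantiSets : Antitone fun n : ℕ => {ω | Y ω ≤ ((-(n:ℚ) : ℚ):ℝ)} := by
          intro a b hab ω hω
          simp only [mem_setOf_eq] at *
          have hc : ((a:ℚ):ℝ) ≤ ((b:ℚ):ℝ) := by exact_mod_cast hab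
          push_cast at *
          linarith
        have hmeasSets : ∀ n : ℕ, NullMeasurableSet {ω | Y ω ≤ ((-(n:ℚ) : ℚ):ℝ)} P := fun n =>
          (hY measurableSet_Iic).nullMeasurableSet
        rw [← hantiSets.measure_iInter hmeasSets ⟨0, measure_ne_top _ _⟩]
        have hI : (⋂ n : ℕ, {ω | Y ω ≤ ((-(n:ℚ) : ℚ):ℝ)}) = ∅ := by
          ext ω
          simp only [mem_iInter, mem_setOf_eq, mem_empty_iff_false, iff_false, not_forall]
          obtain ⟨n, hn⟩ := exists_nat_gt (-(Y ω))
          refine ⟨n, ?_⟩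
          push_cast
          push_neg
          linarith
        rw [hI, measure_empty]
      · rw [hint]
        exact measure_ne_top _ _
    have hTmeas : Measurable fun x => ⨅ n : ℕ, ENNReal.ofReal (f x (-(n:ℚ))) :=
      Measurable.iInf hmeasn
    filter_upwards [(lintegral_eq_zero_iff hTmeas).1 hTint] with x hx
    exact hx
  have hbot : ∀ᵐ x ∂μ, Tendsto (f x) atBot (𝓝 0) := by
    filter_upwards [hT] with x hx
    have hbdd : BddBelow (range (f x)) := ⟨0, by rintro _ ⟨q, rfl⟩; exact hf0 x q⟩
    have ht := tendsto_atBot_ciInf (hmono_f x) hbdd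
    have hL : (⨅ q : ℚ, f x q) = 0 := by
      refine le_antisymm ?_ (le_ciInf fun q => hf0 x q)
      have h0le : ENNReal.ofReal (⨅ q : ℚ, f x q) = 0 := by
        refine le_antisymm ?_ zero_le
        rw [← hx]
        exact le_iInf fun n => ENNReal.ofReal_le_ofReal (ciInf_le hbdd (-(n:ℚ)))
      exact ENNReal.ofReal_eq_zero.mp h0le
    rwa [hL] at ht
  have hGood : ∀ᵐ x ∂μ, (∀ y, F x y ≤ 1) ∧ Tendsto (f x) atTop (𝓝 1) ∧
      Tendsto (f x) atBot (𝓝 0) := by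
    filter_upwards [hF1, htop, hbot] with x h1' h2' h3'
    exact ⟨h1', h2', h3'⟩
  -- Pointwise identities at good points
  have hK1 : ∀ x, (∀ y, F x y ≤ 1) → Tendsto (f x) atTop (𝓝 1) → Tendsto (f x) atBot (𝓝 0) →
      ∀ y : ℝ, σ x y = min 1 (max 0 (F x y)) := by
    intro x hx1 hxt hxb y
    have hGcont : Continuous fun z : ℝ => min 1 (max 0 (F x z)) :=
      continuous_const.min (continuous_const.max (hFcont x))
    have hGmono : Monotone fun z : ℝ => min 1 (max 0 (F x z)) := fun a b hab =>
      min_le_min le_rfl (max_le_max le_rfl (hFcdf x hab))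
    have hfeq : ∀ q : ℚ, f x q = min 1 (max 0 (F x (q:ℝ))) := fun q => rfl
    have hpt : IsRatStieltjesPoint f x := by
      refine ⟨hmono_f x, hxt, hxb, fun t => ?_⟩
      have := aux_iInf_rat_Ioi hGcont hGmono t
      simpa [hfeq] using this
    have hrat : ∀ q : ℚ, σ x (q:ℝ) = f x q := fun q => by
      rw [hσdef, stieltjesOfMeasurableRat_eq, toRatCDF_of_isRatStieltjesPoint hpt]
    rw [← (σ x).iInf_rat_gt_eq y, ← aux_iInf_rat_gt hGcont hGmono y]
    exact iInf_congr fun r => by rw [hrat r.1, hfeq]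
  have hK2 : ∀ x, (∀ y, F x y ≤ 1) → Tendsto (f x) atTop (𝓝 1) → Tendsto (f x) atBot (𝓝 0) →
      ∀ y : ℝ, (σ x).measure (Iic y) = ENNReal.ofReal (F x y) := by
    intro x hx1 hxt hxb y
    have h := measure_stieltjesOfMeasurableRat_Iic hf x y
    rw [hσdef]
    rw [h, ← hσdef, hK1 x hx1 hxt hxb y,
      min_eq_right (max_le zero_le_one (hx1 y)), aux_ofReal_max]
  have hK3 : ∀ x, (∀ y, F x y ≤ 1) → Tendsto (f x) atTop (𝓝 1) → Tendsto (f x) atBot (𝓝 0) →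
      ∀ u : ℝ, (σ x).measure {y | F x y ≤ u} = if u < 1 then ENNReal.ofReal u else 1 := by
    intro x hx1 hxt hxb u
    by_cases hu1 : u < 1
    · rw [if_pos hu1]
      rcases eq_empty_or_nonempty {y | F x y ≤ u} with hA | hA
      · rw [hA, measure_empty]
        symm
        rw [ENNReal.ofReal_eq_zero]
        by_contra hu0
        push_neg at hu0
        have hpos : ∀ q : ℚ, min 1 u ≤ f x q := by
          intro q
          have hq : u < F x (q:ℝ) := by
            by_contra h
            push_neg at h
            exact (eq_empty_iff_forall_notMem.mp hA (q:ℝ)) h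
          exact min_le_min le_rfl (le_trans hq.le (le_max_right _ _))
        have hle := ge_of_tendsto hxb (Eventually.of_forall hpos)
        have : (0:ℝ) < min 1 u := lt_min one_pos hu0
        linarith
      · have hclosed : IsClosed {y | F x y ≤ u} := isClosed_le (hFcont x) continuous_const
        have hbdd : BddAbove {y | F x y ≤ u} := by
          by_contra hbd
          rw [not_bddAbove_iff] at hbd
          have hle : ∀ q : ℚ, f x q ≤ min 1 (max 0 u) := by
            intro q
            obtain ⟨y, hyA, hy⟩ := hbd (q:ℝ)
            have hq : F x (q:ℝ) ≤ u := le_trans (hFcdf x hy.le) hyA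
            exact min_le_min le_rfl (max_le_max le_rfl hq)
          have h1le := le_of_tendsto hxt (Eventually.of_forall hle)
          have hlt : min 1 (max 0 u) < 1 := min_lt_iff.2 (Or.inr (max_lt one_pos hu1))
          linarith
        set y₀ := sSup {y | F x y ≤ u} with hy₀def
        have hy₀A : F x y₀ ≤ u := hclosed.csSup_mem hA hbdd
        have hAeq : {y | F x y ≤ u} = Iic y₀ := by
          ext z
          constructor
          · exact fun hz => le_csSup hbdd hz
          · exact fun hz => le_trans (hFcdf x hz) hy₀A
        have hFy₀ : F x y₀ = u := by
          refine le_antisymm hy₀A ?_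
          by_contra h
          push_neg at h
          have hev : ∀ᶠ z in 𝓝 y₀, F x z < u := (hFcont x).continuousAt.eventually_lt_const h
          have hev' : ∀ᶠ z in 𝓝[>] y₀, F x z < u := hev.filter_mono nhdsWithin_le_nhds
          obtain ⟨z, hzlt, hzgt⟩ := (hev'.and self_mem_nhdsWithin).exists
          have : z ≤ y₀ := le_csSup hbdd hzlt.le
          exact absurd hzgt (not_lt.mpr this)
        rw [hAeq, hK2 x hx1 hxt hxb y₀, hFy₀]
    · rw [if_neg hu1]
      push_neg at hu1
      have huniv : {y | F x y ≤ u} = univ :=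
        eq_univ_of_forall fun y => le_trans (hx1 y) hu1
      rw [huniv, hσdef]
      exact measure_stieltjesOfMeasurableRat_univ hf x
  -- joint law = compProd
  haveI : IsProbabilityMeasure (P.map fun ω => (X ω, Y ω)) :=
    Measure.isProbabilityMeasure_map (hX.prodMk hY).aemeasurable
  have hlaw : P.map (fun ω => (X ω, Y ω)) = μ.compProd κ := by
    have hIic : MeasurableSpace.generateFrom (range (Iic : ℝ → Set ℝ))
        = (inferInstance : MeasurableSpace ℝ) :=
      ((BorelSpace.measurable_eq (α := ℝ)).trans (borel_eq_generateFrom_Iic ℝ)).symm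
    have hspan : IsCountablySpanning (range (Iic : ℝ → Set ℝ)) := by
      refine ⟨fun n => Iic (n:ℝ), fun n => mem_range_self _, ?_⟩
      refine eq_univ_of_forall fun z => mem_iUnion.2 ?_
      obtain ⟨n, hn⟩ := exists_nat_ge z
      exact ⟨n, hn⟩
    have hgen : (inferInstance : MeasurableSpace (α × ℝ)) = MeasurableSpace.generateFrom
        (image2 (· ×ˢ ·) {s : Set α | MeasurableSet s} (range (Iic : ℝ → Set ℝ))) :=
      (generateFrom_eq_prod MeasurableSpace.generateFrom_measurableSet hIic
        isCountablySpanning_measurableSet hspan).symm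
    refine ext_of_generate_finite _ hgen
      (MeasurableSpace.isPiSystem_measurableSet.prod isPiSystem_Iic) ?_ ?_
    · rintro _ ⟨s, hs, _, ⟨y, rfl⟩, rfl⟩
      rw [Measure.map_apply (hX.prodMk hY) (hs.prod measurableSet_Iic)]
      have hpre : (fun ω => (X ω, Y ω)) ⁻¹' (s ×ˢ Iic y) = {ω | X ω ∈ s ∧ Y ω ≤ y} := rfl
      rw [hpre, hcond s hs y, Measure.compProd_apply_prod hs measurableSet_Iic]
      refine lintegral_congr_ae (ae_restrict_of_ae ?_)
      filter_upwards [hGood] with x hx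
      rw [hκx, hK2 x hx.1 hx.2.1 hx.2.2 y]
    · rw [Measure.compProd_apply_univ]
      simp
  -- key computation
  have hU : Measurable fun ω => F (X ω) (Y ω) := hFmeas.comp (hX.prodMk hY)
  have hkey : ∀ (u : ℝ) (s : Set α), MeasurableSet s →
      P ((fun ω => F (X ω) (Y ω)) ⁻¹' Iic u ∩ X ⁻¹' s)
        = (if u < 1 then ENNReal.ofReal u else 1) * μ s := by
    intro u s hs
    have hBmeas : MeasurableSet ((Function.uncurry F ⁻¹' Iic u) ∩ s ×ˢ (univ : Set ℝ)) :=
      (hFmeas measurableSet_Iic).inter (hs.prod MeasurableSet.univ)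
    have hpre : (fun ω => F (X ω) (Y ω)) ⁻¹' Iic u ∩ X ⁻¹' s
        = (fun ω => (X ω, Y ω)) ⁻¹' ((Function.uncurry F ⁻¹' Iic u) ∩ s ×ˢ (univ : Set ℝ)) := by
      ext ω
      simp only [mem_inter_iff, mem_preimage, mem_Iic, mem_prod, mem_univ, and_true,
        Function.uncurry]
    rw [hpre, ← Measure.map_apply (hX.prodMk hY) hBmeas, hlaw,
      Measure.compProd_apply hBmeas]
    have hsec : ∀ x, (κ x) (Prod.mk x ⁻¹' ((Function.uncurry F ⁻¹' Iic u) ∩ s ×ˢ (univ : Set ℝ)))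
        = s.indicator (fun x => (σ x).measure {y | F x y ≤ u}) x := by
      intro x
      by_cases hx : x ∈ s
      · rw [indicator_of_mem hx, hκx]
        congr 1
        ext z
        simp [Function.uncurry, hx]
      · rw [indicator_of_notMem hx]
        have he : Prod.mk x ⁻¹' ((Function.uncurry F ⁻¹' Iic u) ∩ s ×ˢ (univ : Set ℝ)) = ∅ := by
          ext z
          simp [Function.uncurry, hx]
        rw [he, measure_empty]
    simp_rw [hsec]
    rw [lintegral_indicator hs]
    rw [setLIntegral_congr_fun hs (fun x _ => rfl)]
    rw [show ∫⁻ x in s, (σ x).measure {y | F x y ≤ u} ∂μ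
        = ∫⁻ _ in s, (if u < 1 then ENNReal.ofReal u else 1) ∂μ from
      lintegral_congr_ae (ae_restrict_of_ae (hGood.mono fun x hx =>
        hK3 x hx.1 hx.2.1 hx.2.2 u))]
    rw [setLIntegral_const]
  haveI : IsProbabilityMeasure (P.map fun ω => F (X ω) (Y ω)) :=
    Measure.isProbabilityMeasure_map hU.aemeasurable
  constructor
  · refine Measure.ext_of_Iic _ _ fun u => ?_
    rw [Measure.map_apply hU measurableSet_Iic, aux_vol_Iic u]
    have h := hkey u univ MeasurableSet.univ
    simpa using h
  · rw [indepFun_iff_measure_inter_preimage_eq_mul]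
    intro A s hA hs
    set ν₁ : Measure ℝ := (P.restrict (X ⁻¹' s)).map (fun ω => F (X ω) (Y ω)) with hν₁
    set ν₂ : Measure ℝ := P (X ⁻¹' s) • (P.map (fun ω => F (X ω) (Y ω))) with hν₂
    haveI : IsFiniteMeasure ν₁ := by
      constructor
      rw [hν₁, Measure.map_apply hU MeasurableSet.univ, Set.preimage_univ,
        Measure.restrict_apply_univ]
      exact measure_lt_top P _
    haveI : IsFiniteMeasure ν₂ := by
      constructor
      rw [hν₂, Measure.smul_apply, smul_eq_mul]
      exact ENNReal.mul_lt_top (measure_lt_top P _) (measure_lt_top _ _)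
    have hext : ν₁ = ν₂ := by
      refine Measure.ext_of_Iic ν₁ ν₂ fun u => ?_
      rw [hν₁, Measure.map_apply hU measurableSet_Iic,
        Measure.restrict_apply (hU measurableSet_Iic), hν₂, Measure.smul_apply, smul_eq_mul,
        Measure.map_apply hU measurableSet_Iic]
      have h1 := hkey u s hs
      have h2 := hkey u univ MeasurableSet.univ
      simp only [preimage_univ, inter_univ, measure_univ, mul_one] at h2
      rw [h1, h2, Measure.map_apply hX hs, mul_comm]
    calc P ((fun ω => F (X ω) (Y ω)) ⁻¹' A ∩ X ⁻¹' s) = ν₁ A := by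
          rw [hν₁, Measure.map_apply hU hA, Measure.restrict_apply (hU hA)]
      _ = ν₂ A := by rw [hext]
      _ = P ((fun ω => F (X ω) (Y ω)) ⁻¹' A) * P (X ⁻¹' s) := by
          rw [hν₂, Measure.smul_apply, smul_eq_mul, Measure.map_apply hU hA, mul_comm]
end

section
/- If the bootstrap prediction interval endpoints are asymptotically equivalent in probability to the quantile-estimation interval endpoints (i.e., Ŷ_f + D̂*_{x_f}^{-1}(u) − F̂_{y|x_f}^{-1}(u) → 0 in probability for u = α/2 and u = 1−α/2), and the true conditional CDF F_{y|x_f} is continuous and sup-norm consistently estimated by F̂_{y|x_f}, then the conditional coverage of the model-free bootstrap interval converges in probability to 1−α. -/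
open MeasureTheory Filter Set

private lemma measure_squeeze_aux {Ω : Type*} [MeasurableSpace Ω] (μ : Measure Ω)
    (A B C : ℕ → Set Ω) (hsub : ∀ n, A n ⊆ B n ∪ C n)
    (hB : Tendsto (fun n => μ (B n)) atTop (nhds 0))
    (hC : Tendsto (fun n => μ (C n)) atTop (nhds 0)) :
    Tendsto (fun n => μ (A n)) atTop (nhds 0) := by
  have h : Tendsto (fun n => μ (B n) + μ (C n)) atTop (nhds 0) := by
    simpa using hB.add hC
  exact tendsto_of_tendsto_of_tendsto_of_le_of_le tendsto_const_nhds h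
    (fun n => zero_le)
    (fun n => le_trans (measure_mono (hsub n)) (measure_union_le _ _))

private lemma tendstoInMeasure_sub_aux {Ω : Type*} [MeasurableSpace Ω] (μ : Measure Ω)
    {f g : ℕ → Ω → ℝ} {a b : Ω → ℝ}
    (hf : TendstoInMeasure μ f atTop a) (hg : TendstoInMeasure μ g atTop b) :
    TendstoInMeasure μ (fun n ω => f n ω - g n ω) atTop (fun ω => a ω - b ω) := by
  rw [tendstoInMeasure_iff_dist] at hf hg ⊢
  intro ε hε
  refine measure_squeeze_aux μ _
    (fun n => {ω | ε / 2 ≤ dist (f n ω) (a ω)})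
    (fun n => {ω | ε / 2 ≤ dist (g n ω) (b ω)})
    ?_ (hf (ε/2) (by linarith)) (hg (ε/2) (by linarith))
  intro n ω hω
  simp only [mem_setOf_eq, Real.dist_eq] at hω
  by_contra hc
  simp only [mem_union, mem_setOf_eq, Real.dist_eq, not_or, not_le] at hc
  obtain ⟨h1, h2⟩ := hc
  have key : |f n ω - g n ω - (a ω - b ω)| < ε := by
    have heq : f n ω - g n ω - (a ω - b ω) = (f n ω - a ω) - (g n ω - b ω) := by ring
    calc |f n ω - g n ω - (a ω - b ω)| = |(f n ω - a ω) - (g n ω - b ω)| := by rw [heq]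
      _ ≤ |f n ω - a ω| + |g n ω - b ω| := abs_sub _ _
      _ < ε / 2 + ε / 2 := add_lt_add h1 h2
      _ = ε := by ring
  linarith

private lemma key_endpoint {Ω : Type*} [MeasurableSpace Ω] (μ : Measure Ω)
    (Fhat : ℕ → Ω → ℝ → ℝ) (F : ℝ → ℝ)
    (hF_cont : Continuous F) (hF_mono : StrictMono F)
    (hF_bot : Tendsto F atBot (nhds 0)) (hF_top : Tendsto F atTop (nhds 1))
    (hsup : ∀ ε > (0:ℝ), Tendsto
      (fun n => μ {ω | ∃ y, ε ≤ |Fhat n ω y - F y|}) atTop (nhds 0))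
    (u : ℝ) (hu0 : 0 < u) (hu1 : u < 1) (G : ℕ → Ω → ℝ)
    (hG : TendstoInMeasure μ
      (fun n ω => G n ω - sInf {y | u ≤ Fhat n ω y}) atTop (fun _ => 0)) :
    TendstoInMeasure μ (fun n ω => F (G n ω)) atTop (fun _ => u) := by
  -- surjectivity onto (0,1)
  have hsurj : ∀ v : ℝ, 0 < v → v < 1 → ∃ a, F a = v := by
    intro v hv0 hv1
    obtain ⟨x, hx⟩ : ∃ x, F x < v := (hF_bot.eventually (gt_mem_nhds hv0)).exists
    obtain ⟨y, hy⟩ : ∃ y, v < F y := (hF_top.eventually (lt_mem_nhds hv1)).exists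
    have hxy : x ≤ y := le_of_lt (hF_mono.lt_iff_lt.mp (lt_trans hx hy))
    have := intermediate_value_Icc hxy hF_cont.continuousOn
    obtain ⟨a, _, ha⟩ := this ⟨le_of_lt hx, le_of_lt hy⟩
    exact ⟨a, ha⟩
  rw [tendstoInMeasure_iff_dist] at hG ⊢
  intro ε hε
  set ε' : ℝ := min ε (min (u / 2) ((1 - u) / 2)) with hε'def
  have hε'pos : 0 < ε' := by
    apply lt_min hε
    apply lt_min <;> linarith
  have hε'ε : ε' ≤ ε := min_le_left _ _
  have hε'u : ε' ≤ u / 2 := le_trans (min_le_right _ _) (min_le_left _ _)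
  have hε'u1 : ε' ≤ (1 - u) / 2 := le_trans (min_le_right _ _) (min_le_right _ _)
  set δ : ℝ := ε' / 2 with hδdef
  have hδpos : 0 < δ := by positivity
  have hδε' : δ < ε' := by simp only [hδdef]; linarith
  obtain ⟨am, ham⟩ := hsurj (u - ε') (by linarith) (by linarith)
  obtain ⟨bm, hbm⟩ := hsurj (u - δ) (by linarith) (by linarith)
  obtain ⟨bp, hbp⟩ := hsurj (u + δ) (by linarith) (by linarith)
  obtain ⟨ap, hap⟩ := hsurj (u + ε') (by linarith) (by linarith)
  have hbpap : bp < ap := hF_mono.lt_iff_lt.mp (by rw [hbp, hap]; linarith)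
  have hambm : am < bm := hF_mono.lt_iff_lt.mp (by rw [ham, hbm]; linarith)
  set η : ℝ := min (ap - bp) (bm - am) with hηdef
  have hηpos : 0 < η := lt_min (by linarith) (by linarith)
  refine measure_squeeze_aux μ _
    (fun n => {ω | ∃ y, δ ≤ |Fhat n ω y - F y|})
    (fun n => {ω | η ≤ dist (G n ω - sInf {y | u ≤ Fhat n ω y}) ((fun _ : Ω => (0:ℝ)) ω)})
    ?_ (hsup δ hδpos) (hG η hηpos)
  intro n ω hω
  simp only [mem_setOf_eq, Real.dist_eq] at hω
  by_contra hc
  simp only [mem_union, mem_setOf_eq, not_or, not_le, not_exists] at hc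
  obtain ⟨h1, h2⟩ := hc
  rw [Real.dist_eq, sub_zero] at h2
  set q : ℝ := sInf {y | u ≤ Fhat n ω y} with hqdef
  have h2' := abs_lt.mp h2
  -- b₊ is in the set
  have hbpmem : bp ∈ {y | u ≤ Fhat n ω y} := by
    have := abs_lt.mp (h1 bp)
    simp only [mem_setOf_eq]
    linarith [hbp ▸ this.1]
  -- b₋ is a lower bound
  have hlb : ∀ y ∈ {y | u ≤ Fhat n ω y}, bm ≤ y := by
    intro y hy
    simp only [mem_setOf_eq] at hy
    have := abs_lt.mp (h1 y)
    have hFy : F bm < F y := by rw [hbm]; linarith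
    exact le_of_lt (hF_mono.lt_iff_lt.mp hFy)
  have hq_le : q ≤ bp := csInf_le ⟨bm, hlb⟩ hbpmem
  have hq_ge : bm ≤ q := le_csInf ⟨bp, hbpmem⟩ hlb
  have hGlt : G n ω < ap := by
    have : η ≤ ap - bp := min_le_left _ _
    linarith [h2'.2]
  have hGgt : am < G n ω := by
    have : η ≤ bm - am := min_le_right _ _
    linarith [h2'.1]
  have hFG1 : F (G n ω) < u + ε' := hap ▸ hF_mono hGlt
  have hFG2 : u - ε' < F (G n ω) := ham ▸ hF_mono hGgt
  have : |F (G n ω) - u| < ε' := abs_lt.mpr ⟨by linarith, by linarith⟩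
  linarith

/-- Asymptotic conditional validity of the model-free bootstrap
interval. -/
theorem mfb_asymptotic_conditional_validity
    {Ω : Type*} [MeasurableSpace Ω] (μ : Measure Ω) [IsProbabilityMeasure μ]
    (Fhat : ℕ → Ω → ℝ → ℝ) (F : ℝ → ℝ)
    (hF_cont : Continuous F) (hF_mono : StrictMono F)
    (hF_bot : Tendsto F atBot (nhds 0)) (hF_top : Tendsto F atTop (nhds 1))
    (hFhat_cdf : ∀ n ω, Monotone (Fhat n ω))
    (hsup : ∀ ε > (0:ℝ), Tendsto
      (fun n => μ {ω | ∃ y, ε ≤ |Fhat n ω y - F y|}) atTop (nhds 0))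
    (α : ℝ) (hα : α ∈ Ioo (0:ℝ) 1)
    (L U : ℕ → Ω → ℝ)   -- MFB interval endpoints `Ŷ_f + D̂*⁻¹(u)`
    (hL : TendstoInMeasure μ
      (fun n ω => L n ω - sInf {y | α / 2 ≤ Fhat n ω y}) atTop (fun _ => 0))
    (hU : TendstoInMeasure μ
      (fun n ω => U n ω - sInf {y | 1 - α / 2 ≤ Fhat n ω y}) atTop (fun _ => 0)) :
    TendstoInMeasure μ (fun n ω => F (U n ω) - F (L n ω)) atTop (fun _ => 1 - α) := by
  obtain ⟨hα0, hα1⟩ := hα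
  have hUlim : TendstoInMeasure μ (fun n ω => F (U n ω)) atTop (fun _ => 1 - α / 2) :=
    key_endpoint μ Fhat F hF_cont hF_mono hF_bot hF_top hsup (1 - α / 2)
      (by linarith) (by linarith) U hU
  have hLlim : TendstoInMeasure μ (fun n ω => F (L n ω)) atTop (fun _ => α / 2) :=
    key_endpoint μ Fhat F hF_cont hF_mono hF_bot hF_top hsup (α / 2)
      (by linarith) (by linarith) L hL
  have h := tendstoInMeasure_sub_aux μ hUlim hLlim
  have heq : (fun _ : Ω => (1 - α / 2) - α / 2) = fun _ : Ω => 1 - α := by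
    funext; ring
  rwa [heq] at h
end
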